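/- Let δ > 0 and let (g_m)_{m=1}^M be a finite sequence of reals. Define S_0 = δ² and S_m = δ² + ∑_{i=1}^m g_i². If additionally |g_m| ≤ δ for all m, then ∑_{m=1}^M (S_m − S_{m-1})/S_{m-1} ≤ 2·∑_{m=1}^M (ln S_m − ln S_{m-1}) = 2·ln(1 + (∑_{m=1}^M g_m²)/δ²). -/

import Mathlib

lemma aux_ratio_log {a b : ℝ} (ha : 0 < a) (hab : a ≤ b) (hba : b ≤ 2 * a) :
    (b - a) / a ≤ 2 * (Real.log b - Real.log a) := by
  have hb : 0 < b := lt_of_lt_of_le ha hab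
  have h1 : Real.log (a / b) ≤ a / b - 1 := Real.log_le_sub_one_of_pos (by positivity)
  have h2 : Real.log (a / b) = Real.log a - Real.log b := Real.log_div ha.ne' hb.ne'
  have h3 : (b - a) / b ≤ Real.log b - Real.log a := by
    rw [h2] at h1
    have : a / b - 1 = -((b - a) / b) := by field_simp; ring
    linarith [h1, this ▸ h1]
  have h4 : (b - a) / a ≤ 2 * ((b - a) / b) := by
    rw [div_le_iff₀ ha]
    have : 2 * ((b - a) / b) * a = 2 * a * (b - a) / b := by ring
    rw [this, le_div_iff₀ hb]
    nlinarith
  linarith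

theorem stmt_3 (M : ℕ) (δ : ℝ) (hδ : 0 < δ) (g : ℕ → ℝ)
    (hg : ∀ m, |g m| ≤ δ)
    (S : ℕ → ℝ) (hS : ∀ m, S m = δ ^ 2 + ∑ i ∈ Finset.Icc 1 m, g i ^ 2) :
    (∑ m ∈ Finset.Icc 1 M, (S m - S (m - 1)) / S (m - 1)
      ≤ 2 * ∑ m ∈ Finset.Icc 1 M, (Real.log (S m) - Real.log (S (m - 1)))) ∧
    (2 * ∑ m ∈ Finset.Icc 1 M, (Real.log (S m) - Real.log (S (m - 1)))
      = 2 * Real.log (1 + (∑ m ∈ Finset.Icc 1 M, g m ^ 2) / δ ^ 2)) := by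
  have hpos : ∀ m, 0 < S m := by
    intro m
    rw [hS]
    have : (0:ℝ) ≤ ∑ i ∈ Finset.Icc 1 m, g i ^ 2 :=
      Finset.sum_nonneg fun i _ => sq_nonneg _
    positivity
  have hstep : ∀ k, S (k + 1) = S k + g (k + 1) ^ 2 := by
    intro k
    rw [hS, hS, Finset.sum_Icc_succ_top (by omega)]
    ring
  have hdelta : ∀ m, δ ^ 2 ≤ S m := by
    intro m
    rw [hS]
    have : (0:ℝ) ≤ ∑ i ∈ Finset.Icc 1 m, g i ^ 2 :=
      Finset.sum_nonneg fun i _ => sq_nonneg _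
    linarith
  have hg2 : ∀ m, g m ^ 2 ≤ δ ^ 2 := by
    intro m
    have := hg m
    nlinarith [abs_nonneg (g m), sq_abs (g m)]
  constructor
  · rw [Finset.mul_sum]
    apply Finset.sum_le_sum
    intro m hm
    have hm1 : 1 ≤ m := (Finset.mem_Icc.mp hm).1
    obtain ⟨k, rfl⟩ := Nat.exists_eq_add_of_le hm1
    simp only [Nat.add_sub_cancel_left] at *
    rw [Nat.add_comm 1 k] at *
    have hs := hstep k
    apply aux_ratio_log (hpos k) (by nlinarith [sq_nonneg (g (k+1))])
    have := hg2 (k + 1)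
    have := hdelta k
    linarith
  · congr 1
    have htel : ∀ N : ℕ, ∑ m ∈ Finset.Icc 1 N, (Real.log (S m) - Real.log (S (m - 1)))
        = Real.log (S N) - Real.log (S 0) := by
      intro N
      induction N with
      | zero => simp
      | succ n ih =>
        rw [Finset.sum_Icc_succ_top (by omega), ih]
        simp
    rw [htel]
    have hS0 : S 0 = δ ^ 2 := by rw [hS]; simp
    have harg : 1 + (∑ m ∈ Finset.Icc 1 M, g m ^ 2) / δ ^ 2 = S M / δ ^ 2 := by
      rw [hS]
      field_simp
    rw [harg, Real.log_div (hpos M).ne' (by positivity), hS0]
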